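/- Let (M,d) be a homogeneous metric space. Then the connected component of the identity of Iso(M,d) acts transitively on M. -/

import Mathlib

open Set Metric Topology Filter

namespace Statement14Aux

variable {M : Type*} [MetricSpace M]

def isoTop (M : Type*) [MetricSpace M] : TopologicalSpace (M ≃ᵢ M) :=
  TopologicalSpace.induced (fun f : M ≃ᵢ M => (⇑f : M → M)) Pi.topologicalSpace

attribute [local instance] isoTop

lemma continuous_coe : Continuous (fun f : M ≃ᵢ M => (⇑f : M → M)) :=
  continuous_induced_dom

lemma continuous_eval (z : M) : Continuous fun g : M ≃ᵢ M => g z :=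
  (continuous_apply z).comp continuous_coe

lemma continuous_inv' : Continuous fun g : M ≃ᵢ M => (g⁻¹ : M ≃ᵢ M) := by
  rw [show (isoTop M) = TopologicalSpace.induced (fun f : M ≃ᵢ M => (⇑f : M → M))
      Pi.topologicalSpace from rfl, continuous_induced_rng]
  apply continuous_pi
  intro z
  rw [continuous_iff_continuousAt]
  intro g₀
  show Tendsto (fun g : M ≃ᵢ M => (g⁻¹ : M ≃ᵢ M) z) (𝓝 g₀) (𝓝 ((g₀⁻¹ : M ≃ᵢ M) z))
  rw [Metric.tendsto_nhds]
  intro ε hε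
  have hcont : ∀ᶠ g : M ≃ᵢ M in 𝓝 g₀, dist (g (g₀⁻¹ z)) z < ε := by
    have h1 : Tendsto (fun g : M ≃ᵢ M => g (g₀⁻¹ z)) (𝓝 g₀) (𝓝 (g₀ (g₀⁻¹ z))) :=
      ((continuous_eval (g₀⁻¹ z)).tendsto g₀)
    have h0 : dist (g₀ (g₀⁻¹ z)) z = 0 := by simp
    have := Metric.tendsto_nhds.1 h1 ε hε
    filter_upwards [this] with g hg
    calc dist (g (g₀⁻¹ z)) z ≤ dist (g (g₀⁻¹ z)) (g₀ (g₀⁻¹ z)) + dist (g₀ (g₀⁻¹ z)) z := dist_triangle _ _ _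
    _ < ε + 0 := by rw [h0]; simpa using hg
    _ = ε := by ring
  filter_upwards [hcont] with g hg
  have : dist ((g⁻¹ : M ≃ᵢ M) z) ((g₀⁻¹ : M ≃ᵢ M) z) = dist z (g (g₀⁻¹ z)) := by
    conv_lhs => rw [← g.dist_eq]
    simp [IsometryEquiv.apply_symm_apply]
  simpa [this, dist_comm] using hg


lemma continuous_mul' : Continuous fun p : (M ≃ᵢ M) × (M ≃ᵢ M) => p.1 * p.2 := by
  rw [show (isoTop M) = TopologicalSpace.induced (fun f : M ≃ᵢ M => (⇑f : M → M))
      Pi.topologicalSpace from rfl, continuous_induced_rng]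
  apply continuous_pi
  intro z
  rw [continuous_iff_continuousAt]
  intro p₀
  show Tendsto (fun p : (M ≃ᵢ M) × (M ≃ᵢ M) => p.1 (p.2 z)) (𝓝 p₀) (𝓝 (p₀.1 (p₀.2 z)))
  rw [Metric.tendsto_nhds]
  intro ε hε
  have h1 : Tendsto (fun p : (M ≃ᵢ M) × (M ≃ᵢ M) => p.1 (p₀.2 z)) (𝓝 p₀) (𝓝 (p₀.1 (p₀.2 z))) :=
    ((continuous_eval (p₀.2 z)).comp continuous_fst).tendsto p₀
  have h2 : Tendsto (fun p : (M ≃ᵢ M) × (M ≃ᵢ M) => p.2 z) (𝓝 p₀) (𝓝 (p₀.2 z)) :=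
    ((continuous_eval z).comp continuous_snd).tendsto p₀
  filter_upwards [Metric.tendsto_nhds.1 h1 (ε/2) (by linarith),
    Metric.tendsto_nhds.1 h2 (ε/2) (by linarith)] with p hp1 hp2
  calc dist (p.1 (p.2 z)) (p₀.1 (p₀.2 z))
      ≤ dist (p.1 (p.2 z)) (p.1 (p₀.2 z)) + dist (p.1 (p₀.2 z)) (p₀.1 (p₀.2 z)) :=
        dist_triangle _ _ _
    _ = dist (p.2 z) (p₀.2 z) + dist (p.1 (p₀.2 z)) (p₀.1 (p₀.2 z)) := by
        rw [p.1.dist_eq]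
    _ < ε/2 + ε/2 := by exact add_lt_add hp2 hp1
    _ = ε := by ring

instance : IsTopologicalGroup (M ≃ᵢ M) where
  continuous_mul := continuous_mul'
  continuous_inv := continuous_inv'

instance : T2Space (M ≃ᵢ M) := by
  have h : Function.Injective (fun f : M ≃ᵢ M => (⇑f : M → M)) := fun f g hfg => by
    ext z; exact congrFun hfg z
  exact IsEmbedding.t2Space ⟨IsInducing.induced _, h⟩

/-- basic neighborhoods in the pointwise topology -/
lemma exists_finset_basis {C : Set (M ≃ᵢ M)} (hC : IsOpen C) {g : M ≃ᵢ M} (hg : g ∈ C) :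
    ∃ (F : Finset M) (ε : ℝ), 0 < ε ∧
      ∀ h : M ≃ᵢ M, (∀ z ∈ F, dist (h z) (g z) < ε) → h ∈ C := by
  rw [show (isoTop M) = TopologicalSpace.induced (fun f : M ≃ᵢ M => (⇑f : M → M))
      Pi.topologicalSpace from rfl] at hC
  rw [isOpen_induced_iff] at hC
  obtain ⟨O, hO, rfl⟩ := hC
  obtain ⟨I, u, hu, hsub⟩ := isOpen_pi_iff.1 hO _ hg
  have hex : ∀ z : M, ∃ ε : ℝ, 0 < ε ∧ (z ∈ I → Metric.ball (g z) ε ⊆ u z) := by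
    intro z
    by_cases hz : z ∈ I
    · obtain ⟨ε, hε, hb⟩ := Metric.isOpen_iff.1 (hu z hz).1 _ (hu z hz).2
      exact ⟨ε, hε, fun _ => hb⟩
    · exact ⟨1, one_pos, fun h => absurd h hz⟩
  choose εz hεz hball using hex
  by_cases hI : I.Nonempty
  · refine ⟨I, I.inf' hI εz, ?_, ?_⟩
    · exact (Finset.lt_inf'_iff hI).2 fun z hz => hεz z
    · intro h hh
      apply hsub
      intro z hz
      refine hball z hz ?_
      rw [Metric.mem_ball]
      exact lt_of_lt_of_le (hh z hz) (Finset.inf'_le _ hz)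
  · refine ⟨∅, 1, one_pos, fun h _ => hsub fun z hz => ?_⟩
    exact absurd hz (fun hmem => hI ⟨z, hmem⟩)


section Homogeneous

variable [ConnectedSpace M] [LocallyCompactSpace M]

set_option linter.unusedSectionVars false in
lemma exists_eps0 (hhom : ∀ x y : M, ∃ f : M ≃ᵢ M, f x = y) (x₀ : M) :
    ∃ ε₀ : ℝ, 0 < ε₀ ∧ ∀ z : M, IsCompact (closedBall z ε₀) := by
  obtain ⟨K, hKc, hKn⟩ := exists_compact_mem_nhds x₀
  obtain ⟨ε₀, hε₀, hsub⟩ := (Metric.nhds_basis_closedBall.mem_iff).1 hKn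
  refine ⟨ε₀, hε₀, fun z => ?_⟩
  obtain ⟨f, hf⟩ := hhom x₀ z
  have himg : f '' closedBall x₀ ε₀ = closedBall z ε₀ := by
    rw [show (f '' closedBall x₀ ε₀) = f.symm ⁻¹' closedBall x₀ ε₀ from
      congrFun (Set.image_eq_preimage_of_inverse f.symm_apply_apply f.apply_symm_apply) _,
      IsometryEquiv.preimage_closedBall, IsometryEquiv.symm_symm, hf]
  rw [← himg]
  exact ((hKc.of_isClosed_subset Metric.isClosed_closedBall hsub).image f.continuous)

set_option linter.unusedSectionVars false in
lemma sigmaCompact_of {ε₀ : ℝ} (hε₀ : 0 < ε₀)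
    (hball : ∀ z : M, IsCompact (closedBall z ε₀)) : SigmaCompactSpace M := by
  obtain ⟨x₀⟩ : Nonempty M := inferInstance
  have step : ∀ A : Set M, IsCompact A → ∃ B : Set M, IsCompact B ∧
      ∀ w, (∃ k ∈ A, dist w k < ε₀/2) → w ∈ B := by
    intro A hA
    obtain ⟨t, ht⟩ := hA.elim_finite_subcover (fun c : M => ball c (ε₀/2))
      (fun _ => isOpen_ball) (fun k _ => mem_iUnion.2 ⟨k, mem_ball_self (by linarith)⟩)
    refine ⟨⋃ c ∈ t, closedBall c ε₀, t.isCompact_biUnion fun c _ => hball c, ?_⟩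
    rintro w ⟨k, hkA, hwk⟩
    obtain ⟨c, hct, hkc⟩ := mem_iUnion₂.1 (ht hkA)
    have hkc' := mem_ball.1 hkc
    exact mem_biUnion hct (by rw [mem_closedBall]; linarith [dist_triangle w k c])
  choose B hBc hBs using step
  let K : ℕ → {A : Set M // IsCompact A} := fun n =>
    Nat.rec ⟨closedBall x₀ ε₀, hball x₀⟩ (fun _ p => ⟨B p.1 p.2, hBc _ _⟩) n
  have hKsucc : ∀ n w, (∃ k ∈ (K n).1, dist w k < ε₀/2) → w ∈ (K (n+1)).1 := by
    intro n w h
    exact hBs (K n).1 (K n).2 w h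
  have hU : IsClopen (⋃ n, (K n).1) := by
    constructor
    · apply isClosed_of_closure_subset
      intro w hw
      obtain ⟨b, hbU, hwb⟩ := Metric.mem_closure_iff.1 hw (ε₀/2) (by linarith)
      obtain ⟨n, hbn⟩ := mem_iUnion.1 hbU
      exact mem_iUnion.2 ⟨n+1, hKsucc n w ⟨b, hbn, hwb⟩⟩
    · rw [Metric.isOpen_iff]
      intro w hw
      obtain ⟨n, hn⟩ := mem_iUnion.1 hw
      refine ⟨ε₀/2, by linarith, fun w' hw' => ?_⟩
      exact mem_iUnion.2 ⟨n+1, hKsucc n w' ⟨w, hn, mem_ball.1 hw'⟩⟩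
  have huniv : (⋃ n, (K n).1) = univ :=
    hU.eq_univ ⟨x₀, mem_iUnion.2 ⟨0, mem_closedBall_self hε₀.le⟩⟩
  exact ⟨⟨fun n => (K n).1, fun n => (K n).2, huniv⟩⟩

set_option linter.unusedSectionVars false in
lemma exists_pointwise_compact {ε₀ : ℝ} (hε₀ : 0 < ε₀)
    (hball : ∀ z : M, IsCompact (closedBall z ε₀)) (x : M) (w : M) :
    ∃ C : Set M, IsCompact C ∧ ∀ g : M ≃ᵢ M, dist (g x) x ≤ ε₀ → g w ∈ C := by
  set A := {w : M | ∃ C : Set M, IsCompact C ∧ ∀ g : M ≃ᵢ M, dist (g x) x ≤ ε₀ → g w ∈ C}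
    with hA
  suffices h : A = univ by
    have : w ∈ A := by rw [h]; trivial
    exact this
  have key : ∀ w' ∈ A, ∀ v : M, dist v w' < ε₀/2 → v ∈ A := by
    rintro w' ⟨C, hC, hmem⟩ v hd
    obtain ⟨t, ht⟩ := hC.elim_finite_subcover (fun c : M => ball c (ε₀/2))
      (fun _ => isOpen_ball) (fun k _ => mem_iUnion.2 ⟨k, mem_ball_self (by linarith)⟩)
    refine ⟨⋃ c ∈ t, closedBall c ε₀, t.isCompact_biUnion fun c _ => hball c, ?_⟩
    intro g hg
    obtain ⟨c, hct, hkc⟩ := mem_iUnion₂.1 (ht (hmem g hg))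
    have h1 : dist (g v) (g w') = dist v w' := g.dist_eq v w'
    have h2 := mem_ball.1 hkc
    exact mem_biUnion hct (by rw [mem_closedBall]; linarith [dist_triangle (g v) (g w') c])
  have hclopen : IsClopen A := by
    constructor
    · apply isClosed_of_closure_subset
      intro v hv
      obtain ⟨w', hw'A, hvw'⟩ := Metric.mem_closure_iff.1 hv (ε₀/2) (by linarith)
      exact key w' hw'A v hvw'
    · rw [Metric.isOpen_iff]
      intro w' hw'
      exact ⟨ε₀/2, by linarith, fun v hv => key w' hw' v (mem_ball.1 hv)⟩
  apply hclopen.eq_univ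
  exact ⟨x, closedBall x ε₀, hball x, fun g hg => mem_closedBall.2 hg⟩

set_option linter.unusedSectionVars false in
lemma isCompact_ballG {ε₀ : ℝ} (hε₀ : 0 < ε₀)
    (hball : ∀ z : M, IsCompact (closedBall z ε₀)) (x : M) :
    IsCompact {g : M ≃ᵢ M | dist (g x) x ≤ ε₀} := by
  choose C hCc hCmem using exists_pointwise_compact hε₀ hball x
  set Φ : (M ≃ᵢ M) → (M → M) × (M → M) := fun g => (⇑g, ⇑(g⁻¹)) with hΦ
  have hcont : Continuous Φ := continuous_coe.prodMk (continuous_coe.comp continuous_inv')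
  have hind : IsInducing Φ := by
    constructor
    apply le_antisymm
    · exact continuous_iff_le_induced.1 hcont
    · have h1 : (fun f : M ≃ᵢ M => (⇑f : M → M)) = Prod.fst ∘ Φ := rfl
      show TopologicalSpace.induced Φ _ ≤ isoTop M
      rw [show (isoTop M) = TopologicalSpace.induced (fun f : M ≃ᵢ M => (⇑f : M → M))
        Pi.topologicalSpace from rfl, h1, ← induced_compose]
      exact induced_mono inf_le_left
  rw [hind.isCompact_iff]
  set P : Set ((M → M) × (M → M)) := {p | (∀ z z', dist (p.1 z) (p.1 z') = dist z z') ∧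
      (∀ z z', dist (p.2 z) (p.2 z') = dist z z') ∧
      (∀ z, p.1 (p.2 z) = z) ∧ (∀ z, p.2 (p.1 z) = z) ∧ dist (p.1 x) x ≤ ε₀} with hP
  -- from a point of P, construct the isometry equiv
  have hmk : ∀ p ∈ P, ∃ g : M ≃ᵢ M, Φ g = p ∧ dist (g x) x ≤ ε₀ := by
    rintro p ⟨h1, h2, h3, h4, h5⟩
    refine ⟨⟨⟨p.1, p.2, h4, h3⟩, Isometry.of_dist_eq h1⟩, ?_, h5⟩
    rfl
  have hPeq : Φ '' {g : M ≃ᵢ M | dist (g x) x ≤ ε₀} = P := by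
    apply Subset.antisymm
    · rintro _ ⟨g, hg, rfl⟩
      refine ⟨fun z z' => g.dist_eq z z', fun z z' => (g⁻¹).dist_eq z z',
        fun z => g.apply_symm_apply z, fun z => g.symm_apply_apply z, hg⟩
    · rintro p hp
      obtain ⟨g, hgp, hg⟩ := hmk p hp
      exact ⟨g, hg, hgp⟩
  rw [hPeq]
  have hQ : IsCompact ((univ.pi fun z : M => C z) ×ˢ (univ.pi fun z : M => C z)) :=
    (isCompact_univ_pi fun z => hCc z).prod (isCompact_univ_pi fun z => hCc z)
  apply hQ.of_isClosed_subset
  · -- P is closed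
    apply isClosed_of_closure_subset
    intro p hp
    have hc1 : ∀ w : M, Continuous fun q : (M → M) × (M → M) => q.1 w :=
      fun w => (continuous_apply w).comp continuous_fst
    have hc2 : ∀ w : M, Continuous fun q : (M → M) × (M → M) => q.2 w :=
      fun w => (continuous_apply w).comp continuous_snd
    have hP1 : ∀ z z', dist (p.1 z) (p.1 z') = dist z z' := by
      intro z z'
      have hcl : IsClosed {q : (M → M) × (M → M) | dist (q.1 z) (q.1 z') = dist z z'} :=
        isClosed_eq ((hc1 z).dist (hc1 z')) continuous_const
      exact closure_minimal (fun q hq => hq.1 z z') hcl hp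
    have hP2 : ∀ z z', dist (p.2 z) (p.2 z') = dist z z' := by
      intro z z'
      have hcl : IsClosed {q : (M → M) × (M → M) | dist (q.2 z) (q.2 z') = dist z z'} :=
        isClosed_eq ((hc2 z).dist (hc2 z')) continuous_const
      exact closure_minimal (fun q hq => hq.2.1 z z') hcl hp
    have hP5 : dist (p.1 x) x ≤ ε₀ := by
      have hcl : IsClosed {q : (M → M) × (M → M) | dist (q.1 x) x ≤ ε₀} :=
        isClosed_le ((hc1 x).dist continuous_const) continuous_const
      exact closure_minimal (fun q hq => hq.2.2.2.2) hcl hp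
    -- the two composition identities
    have hcomp : ∀ z : M, p.1 (p.2 z) = z ∧ p.2 (p.1 z) = z := by
      intro z
      have hkey : ∀ ε : ℝ, 0 < ε → dist (p.1 (p.2 z)) z < 2*ε ∧ dist (p.2 (p.1 z)) z < 2*ε := by
        intro ε hε
        have hNopen : IsOpen {q : (M → M) × (M → M) |
            dist (q.1 (p.2 z)) (p.1 (p.2 z)) < ε ∧ dist (q.2 z) (p.2 z) < ε ∧
            dist (q.2 (p.1 z)) (p.2 (p.1 z)) < ε ∧ dist (q.1 z) (p.1 z) < ε} := by
          refine IsOpen.inter ?_ (IsOpen.inter ?_ (IsOpen.inter ?_ ?_)) <;>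
            apply isOpen_lt (Continuous.dist ?_ continuous_const) continuous_const
          exacts [hc1 (p.2 z), hc2 z, hc2 (p.1 z), hc1 z]
        have hpmem : p ∈ {q : (M → M) × (M → M) |
            dist (q.1 (p.2 z)) (p.1 (p.2 z)) < ε ∧ dist (q.2 z) (p.2 z) < ε ∧
            dist (q.2 (p.1 z)) (p.2 (p.1 z)) < ε ∧ dist (q.1 z) (p.1 z) < ε} := by
          refine ⟨?_, ?_, ?_, ?_⟩ <;> simpa using hε
        obtain ⟨q, ⟨hq1, hq2, hq3, hq4⟩, hqP⟩ :=
          mem_closure_iff.1 hp _ hNopen hpmem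
        obtain ⟨hq1', hq2', hq3', hq4', _⟩ := hqP
        constructor
        · calc dist (p.1 (p.2 z)) z
              ≤ dist (p.1 (p.2 z)) (q.1 (p.2 z)) + dist (q.1 (p.2 z)) z := dist_triangle _ _ _
            _ < ε + dist (q.1 (p.2 z)) z := by rw [dist_comm] at hq1; linarith
            _ ≤ ε + (dist (q.1 (p.2 z)) (q.1 (q.2 z)) + dist (q.1 (q.2 z)) z) := by
                linarith [dist_triangle (q.1 (p.2 z)) (q.1 (q.2 z)) z]
            _ = ε + (dist (p.2 z) (q.2 z) + 0) := by
                rw [hq1' (p.2 z) (q.2 z), hq3' z, dist_self]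
            _ < 2*ε := by rw [dist_comm] at hq2; linarith
        · calc dist (p.2 (p.1 z)) z
              ≤ dist (p.2 (p.1 z)) (q.2 (p.1 z)) + dist (q.2 (p.1 z)) z := dist_triangle _ _ _
            _ < ε + dist (q.2 (p.1 z)) z := by rw [dist_comm] at hq3; linarith
            _ ≤ ε + (dist (q.2 (p.1 z)) (q.2 (q.1 z)) + dist (q.2 (q.1 z)) z) := by
                linarith [dist_triangle (q.2 (p.1 z)) (q.2 (q.1 z)) z]
            _ = ε + (dist (p.1 z) (q.1 z) + 0) := by
                rw [hq2' (p.1 z) (q.1 z), hq4' z, dist_self]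
            _ < 2*ε := by rw [dist_comm] at hq4; linarith
      constructor
      · by_contra h
        have hpos : 0 < dist (p.1 (p.2 z)) z := dist_pos.2 h
        have := (hkey (dist (p.1 (p.2 z)) z / 3) (by linarith)).1
        linarith
      · by_contra h
        have hpos : 0 < dist (p.2 (p.1 z)) z := dist_pos.2 h
        have := (hkey (dist (p.2 (p.1 z)) z / 3) (by linarith)).2
        linarith
    exact ⟨hP1, hP2, fun z => (hcomp z).1, fun z => (hcomp z).2, hP5⟩
  · -- P ⊆ Q
    intro p hp
    obtain ⟨g, hgp, hg⟩ := hmk p hp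
    have hg' : dist (g⁻¹ x) x ≤ ε₀ := by
      have : dist (g (g⁻¹ x)) (g x) = dist (g⁻¹ x) x := g.dist_eq _ _
      rw [IsometryEquiv.apply_inv_self] at this
      rw [← this, dist_comm]
      exact hg
    constructor
    · intro z _
      have : p.1 z = g z := by rw [← hgp]
      rw [this]
      exact hCmem z g hg
    · intro z _
      have : p.2 z = g⁻¹ z := by rw [← hgp]
      rw [this]
      exact hCmem z g⁻¹ hg'

set_option linter.unusedSectionVars false in
lemma isCompact_near (hhom : ∀ x y : M, ∃ f : M ≃ᵢ M, f x = y) {ε₀ : ℝ} (hε₀ : 0 < ε₀)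
    (hball : ∀ z : M, IsCompact (closedBall z ε₀)) (x y : M) :
    IsCompact {g : M ≃ᵢ M | dist (g x) y ≤ ε₀} := by
  obtain ⟨f, hf⟩ := hhom x y
  have himg : {g : M ≃ᵢ M | dist (g x) y ≤ ε₀} =
      (fun h : M ≃ᵢ M => f * h) '' {g : M ≃ᵢ M | dist (g x) x ≤ ε₀} := by
    ext g
    simp only [mem_setOf_eq, mem_image]
    constructor
    · intro hg
      refine ⟨f⁻¹ * g, ?_, by group⟩
      show dist (f⁻¹ (g x)) x ≤ ε₀
      have h1 : dist (f (f⁻¹ (g x))) (f x) = dist (f⁻¹ (g x)) x := f.dist_eq _ _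
      rw [IsometryEquiv.apply_inv_self, hf] at h1
      rw [← h1]
      exact hg
    · rintro ⟨u, hu, rfl⟩
      show dist (f (u x)) y ≤ ε₀
      have h1 : dist (f (u x)) (f x) = dist (u x) x := f.dist_eq _ _
      rw [hf] at h1
      rw [h1]
      exact hu
  rw [himg]
  exact (isCompact_ballG hε₀ hball x).image (continuous_mul_left f)

set_option linter.unusedSectionVars false in
lemma isCompact_fiber (hhom : ∀ x y : M, ∃ f : M ≃ᵢ M, f x = y) {ε₀ : ℝ} (hε₀ : 0 < ε₀)
    (hball : ∀ z : M, IsCompact (closedBall z ε₀)) (x y : M) :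
    IsCompact {g : M ≃ᵢ M | g x = y} := by
  apply (isCompact_near hhom hε₀ hball x y).of_isClosed_subset
  · exact IsClosed.preimage (continuous_eval x) isClosed_singleton
  · intro g hg
    simp only [mem_setOf_eq] at hg ⊢
    rw [hg, dist_self]
    exact hε₀.le

set_option linter.unusedSectionVars false in
lemma micro (hhom : ∀ x y : M, ∃ f : M ≃ᵢ M, f x = y) {ε₀ : ℝ} (hε₀ : 0 < ε₀)
    (hball : ∀ z : M, IsCompact (closedBall z ε₀)) (x : M) (F : Finset M)
    {ε : ℝ} (hε : 0 < ε) (hεle : ε ≤ ε₀) :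
    ∃ δ : ℝ, 0 < δ ∧ ∀ y', dist y' x < δ →
      ∃ g : M ≃ᵢ M, (∀ z ∈ F, dist (g z) z ≤ 2*ε) ∧ dist (g x) x ≤ 2*ε ∧ g x = y' := by
  haveI : SigmaCompactSpace M := sigmaCompact_of hε₀ hball
  haveI : SecondCountableTopology M := inferInstance
  classical
  set F' : Finset M := insert x F with hF'
  set Nb : Set (M ≃ᵢ M) := {g : M ≃ᵢ M | ∀ z ∈ F', dist (g z) z ≤ ε} with hNb
  have hNbcpt : IsCompact Nb := by
    apply (isCompact_ballG hε₀ hball x).of_isClosed_subset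
    · have : Nb = ⋂ z ∈ F', {g : M ≃ᵢ M | dist (g z) z ≤ ε} := by
        ext g; simp [hNb]
      rw [this]
      exact isClosed_biInter fun z _ =>
        isClosed_le ((continuous_eval z).dist continuous_const) continuous_const
    · intro g hg
      exact le_trans (hg x (Finset.mem_insert_self x F)) hεle
  set Nx : Set M := (fun g : M ≃ᵢ M => g x) '' Nb with hNx
  have hNxcpt : IsCompact Nx := hNbcpt.image (continuous_eval x)
  -- countable family covering M
  set ψ : (M ≃ᵢ M) → (↥(F' : Set M) → M) := fun g z => g z.1 with hψ
  obtain ⟨D, hDc, hDd⟩ := TopologicalSpace.exists_countable_dense (↥(range ψ))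
  haveI : Countable ↥D := hDc.to_subtype
  have hpick : ∀ d : ↥D, ∃ g : M ≃ᵢ M, ψ g = d.1.1 := fun d => d.1.2
  choose gd hgd using hpick
  have hcover : (⋃ d : ↥D, (⇑(gd d)) '' Nx) = univ := by
    apply eq_univ_of_forall
    intro y'
    obtain ⟨h, hh⟩ := hhom x y'
    -- find d close to ψ h
    have : (⟨ψ h, mem_range_self h⟩ : ↥(range ψ)) ∈ closure D := hDd _
    obtain ⟨d, hdD, hdist⟩ := Metric.mem_closure_iff.1 this ε hε
    have hdist' : ∀ z : ↥(F' : Set M), dist (ψ h z) (d.1 z) < ε := by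
      rw [Subtype.dist_eq] at hdist
      exact fun z => lt_of_le_of_lt (dist_le_pi_dist (ψ h) d.1 z) hdist
    refine mem_iUnion.2 ⟨⟨d, hdD⟩, ?_⟩
    set u : M ≃ᵢ M := (gd ⟨d, hdD⟩)⁻¹ * h with hu
    have humem : u ∈ Nb := by
      intro z hz
      show dist ((gd ⟨d, hdD⟩)⁻¹ (h z)) z ≤ ε
      have h1 : dist ((gd ⟨d, hdD⟩) ((gd ⟨d, hdD⟩)⁻¹ (h z))) ((gd ⟨d, hdD⟩) z)
          = dist ((gd ⟨d, hdD⟩)⁻¹ (h z)) z := (gd ⟨d, hdD⟩).dist_eq _ _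
      rw [IsometryEquiv.apply_inv_self] at h1
      rw [← h1]
      have h2 := hdist' ⟨z, hz⟩
      have h3 : (d.1 : ↥(F' : Set M) → M) ⟨z, hz⟩ = (gd ⟨d, hdD⟩) z := by
        rw [← hgd ⟨d, hdD⟩]
      rw [h3] at h2
      exact h2.le
    refine ⟨u x, mem_image_of_mem _ humem, ?_⟩
    show (gd ⟨d, hdD⟩) (u x) = y'
    rw [hu]
    show (gd ⟨d, hdD⟩) (((gd ⟨d, hdD⟩)⁻¹ * h) x) = y'
    rw [IsometryEquiv.mul_apply, IsometryEquiv.apply_inv_self]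
    exact hh
  have hclosed : ∀ d : ↥D, IsClosed ((⇑(gd d)) '' Nx) :=
    fun d => (hNxcpt.image (gd d).continuous).isClosed
  obtain ⟨d₀, hd₀⟩ := nonempty_interior_of_iUnion_of_closed hclosed hcover
  -- transfer interior
  have hNxint : (interior Nx).Nonempty := by
    have : (⇑(gd d₀)) '' Nx = (gd d₀).toHomeomorph '' Nx := rfl
    rw [this, ← Homeomorph.image_interior] at hd₀
    obtain ⟨w, hw⟩ := hd₀
    obtain ⟨v, hv, _⟩ := hw
    exact ⟨v, hv⟩
  obtain ⟨u₀, hu₀⟩ := hNxint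
  obtain ⟨v, hvNb, hvx⟩ := interior_subset hu₀
  obtain ⟨δ, hδ, hballsub⟩ := Metric.isOpen_iff.1 isOpen_interior u₀ hu₀
  refine ⟨δ, hδ, fun y' hy' => ?_⟩
  have hvy' : v y' ∈ Nx := by
    apply interior_subset
    apply hballsub
    rw [mem_ball, ← hvx]
    calc dist (v y') (v x) = dist y' x := v.dist_eq _ _
    _ < δ := hy'
  obtain ⟨h, hhNb, hhx⟩ := hvy'
  refine ⟨v⁻¹ * h, ?_, ?_, ?_⟩
  · intro z hz
    show dist (v⁻¹ (h z)) z ≤ 2*ε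
    have h1 : dist (v (v⁻¹ (h z))) (v z) = dist (v⁻¹ (h z)) z := v.dist_eq _ _
    rw [IsometryEquiv.apply_inv_self] at h1
    rw [← h1]
    calc dist (h z) (v z) ≤ dist (h z) z + dist z (v z) := dist_triangle _ _ _
    _ ≤ ε + ε := add_le_add (hhNb z (Finset.mem_insert_of_mem hz))
        (by rw [dist_comm]; exact hvNb z (Finset.mem_insert_of_mem hz))
    _ = 2*ε := by ring
  · show dist (v⁻¹ (h x)) x ≤ 2*ε
    have h1 : dist (v (v⁻¹ (h x))) (v x) = dist (v⁻¹ (h x)) x := v.dist_eq _ _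
    rw [IsometryEquiv.apply_inv_self] at h1
    rw [← h1]
    calc dist (h x) (v x) ≤ dist (h x) x + dist x (v x) := dist_triangle _ _ _
    _ ≤ ε + ε := add_le_add (hhNb x (Finset.mem_insert_self x F))
        (by rw [dist_comm]; exact hvNb x (Finset.mem_insert_self x F))
    _ = 2*ε := by ring
  · show v⁻¹ (h x) = y'
    have hhx' : h x = v y' := hhx
    rw [hhx']
    exact v.inv_apply_self y'

set_option linter.unusedSectionVars false in
lemma clopen_orbit (hhom : ∀ x y : M, ∃ f : M ≃ᵢ M, f x = y) {ε₀ : ℝ} (hε₀ : 0 < ε₀)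
    (hball : ∀ z : M, IsCompact (closedBall z ε₀)) (x : M) {C : Set (M ≃ᵢ M)}
    (hC : IsClopen C) (h1C : (1 : M ≃ᵢ M) ∈ C) (y : M) : ∃ g ∈ C, g x = y := by
  set S : Set M := (fun g : M ≃ᵢ M => g x) '' C with hS
  suffices hSuniv : S = univ by
    have : y ∈ S := by rw [hSuniv]; trivial
    obtain ⟨g, hgC, hgx⟩ := this
    exact ⟨g, hgC, hgx⟩
  have hSopen : IsOpen S := by
    rw [Metric.isOpen_iff]
    rintro y' ⟨g, hgC, hgx⟩
    obtain ⟨F₀, ε', hε', hbasis⟩ := exists_finset_basis hC.2 hgC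
    have hε : (0:ℝ) < min ε₀ (ε'/3) := lt_min hε₀ (by linarith)
    obtain ⟨δ, hδ, hmic⟩ := micro hhom hε₀ hball x F₀ hε (min_le_left _ _)
    refine ⟨δ, hδ, fun y'' hy'' => ?_⟩
    rw [mem_ball] at hy''
    have hgx' : g x = y' := hgx
    have hdist : dist (g⁻¹ y'') x < δ := by
      have h1 : dist (g (g⁻¹ y'')) (g x) = dist (g⁻¹ y'') x := g.dist_eq _ _
      rw [IsometryEquiv.apply_inv_self, hgx'] at h1
      rw [← h1]
      exact hy''
    obtain ⟨g', hg'F, _, hg'x⟩ := hmic (g⁻¹ y'') hdist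
    refine ⟨g * g', hbasis _ ?_, ?_⟩
    · intro z hz
      show dist (g (g' z)) (g z) < ε'
      rw [g.dist_eq]
      calc dist (g' z) z ≤ 2 * min ε₀ (ε'/3) := hg'F z hz
      _ ≤ 2 * (ε'/3) := by
          have := min_le_right ε₀ (ε'/3); linarith
      _ < ε' := by linarith
    · show g (g' x) = y''
      rw [hg'x, IsometryEquiv.apply_inv_self]
  have hSclosed : IsClosed S := by
    apply isClosed_of_closure_subset
    intro y' hy'
    set E : Set (M ≃ᵢ M) := C ∩ {g : M ≃ᵢ M | dist (g x) y' ≤ ε₀} with hE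
    have hEcpt : IsCompact E := (isCompact_near hhom hε₀ hball x y').inter_left hC.1
    have hKclosed : IsClosed ((fun g : M ≃ᵢ M => g x) '' E) :=
      (hEcpt.image (continuous_eval x)).isClosed
    have hyK : y' ∈ (fun g : M ≃ᵢ M => g x) '' E := by
      rw [← hKclosed.closure_eq]
      rw [Metric.mem_closure_iff]
      intro r hr
      obtain ⟨s, hsS, hds⟩ := Metric.mem_closure_iff.1 hy' (min r ε₀) (lt_min hr hε₀)
      obtain ⟨g, hgC, hgx⟩ := hsS
      refine ⟨s, ⟨g, ⟨hgC, ?_⟩, hgx⟩, lt_of_lt_of_le hds (min_le_left _ _)⟩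
      show dist (g x) y' ≤ ε₀
      have hgx' : g x = s := hgx
      rw [hgx', dist_comm]
      exact (lt_of_lt_of_le hds (min_le_right _ _)).le
    obtain ⟨g, hgE, hgx⟩ := hyK
    exact ⟨g, hgE.1, hgx⟩
  exact IsClopen.eq_univ ⟨hSclosed, hSopen⟩ ⟨x, 1, h1C, rfl⟩

end Homogeneous

section VanDantzig

variable {H : Type*} [Group H] [TopologicalSpace H] [IsTopologicalGroup H]

open scoped Pointwise

lemma normal_ccOne (G : Type*) [Group G] [TopologicalSpace G] [IsTopologicalGroup G] :
    (Subgroup.connectedComponentOfOne G).Normal := by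
  constructor
  intro n hn g
  have hcont : Continuous fun h : G => g * h * g⁻¹ := by
    exact (continuous_mul_right g⁻¹).comp (continuous_mul_left g)
  have himg := hcont.image_connectedComponent_subset (1 : G)
  have h1 : g * (1:G) * g⁻¹ = 1 := by group
  rw [h1] at himg
  exact himg ⟨n, hn, rfl⟩

lemma exist_mul_closure_nhd' {W : Set H} (Wc : IsCompact W) (Wo : IsOpen W) :
    ∃ T ∈ 𝓝 (1 : H), W * T ⊆ W := by
  apply Wc.induction_on (p := fun S => ∃ T ∈ 𝓝 (1 : H), S * T ⊆ W)
    ⟨univ, univ_mem, by simp only [empty_mul, empty_subset]⟩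
    (fun _ _ huv ⟨T, hT, mem⟩ => ⟨T, hT, (mul_subset_mul_right huv).trans mem⟩)
    (fun U V ⟨T₁, hT₁, mem1⟩ ⟨T₂, hT₂, mem2⟩ => ⟨T₁ ∩ T₂, inter_mem hT₁ hT₂, by
      rw [union_mul]
      exact union_subset ((mul_subset_mul_left inter_subset_left).trans mem1)
        ((mul_subset_mul_left inter_subset_right).trans mem2)⟩)
  intro x memW
  have hx1 : (x, 1) ∈ (fun p : H × H => p.1 * p.2) ⁻¹' W := by simp [memW]
  rcases isOpen_prod_iff.mp (continuous_mul.isOpen_preimage W Wo) x 1 hx1 with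
    ⟨U, V, Uopen, Vopen, xmemU, onememV, prodsub⟩
  have h6 : U * V ⊆ W := mul_subset_iff.mpr fun _ hx _ hy => prodsub (mk_mem_prod hx hy)
  exact ⟨U ∩ W, ⟨U, Uopen.mem_nhds xmemU, W, fun _ a => a, rfl⟩,
    V, Vopen.mem_nhds onememV, fun _ a => h6 ((mul_subset_mul_right inter_subset_left) a)⟩

lemma exists_openSubgroup_sub_compact_open {W : Set H} (Wc : IsCompact W) (Wo : IsOpen W)
    (einW : (1:H) ∈ W) : ∃ U : Subgroup H, IsOpen (U : Set H) ∧ (U : Set H) ⊆ W := by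
  obtain ⟨S, Smemnhds, mulclose⟩ := exist_mul_closure_nhd' Wc Wo
  rcases mem_nhds_iff.mp Smemnhds with ⟨U, UsubS, Uopen, onememU⟩
  set V : Set H := U ∩ U⁻¹ with hVdef
  have hVnhd : V ∈ 𝓝 (1:H) := by
    rw [hVdef]
    exact inter_mem (Uopen.mem_nhds onememU) ((Uopen.inv).mem_nhds (by simpa using onememU))
  have hVinv : V⁻¹ = V := by rw [hVdef]; simp [inter_comm, Set.inter_inv]
  have hVopen : IsOpen V := Uopen.inter Uopen.inv
  have hVmul : W * V ⊆ W := fun a ha =>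
    mulclose (mul_subset_mul_left (UsubS.trans' inter_subset_left) ha)
  let Sgr : Subgroup H := {
    carrier := ⋃ n, V ^ (n + 1)
    mul_mem' := fun ha hb => by
      rcases mem_iUnion.mp ha with ⟨k, hk⟩
      rcases mem_iUnion.mp hb with ⟨l, hl⟩
      apply mem_iUnion.mpr
      use k + 1 + l
      rw [add_assoc, pow_add]
      exact Set.mul_mem_mul hk hl
    one_mem' := by
      apply mem_iUnion.mpr
      use 0
      simpa using mem_of_mem_nhds hVnhd
    inv_mem' := fun ha => by
      rcases mem_iUnion.mp ha with ⟨k, hk⟩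
      apply mem_iUnion.mpr
      use k
      rw [← hVinv]
      simpa only [inv_pow, Set.mem_inv, inv_inv] using hk }
  have hSopen : IsOpen (⋃ n, V ^ (n + 1)) := by
    refine isOpen_iUnion fun n => ?_
    rw [pow_succ]
    exact hVopen.mul_left
  refine ⟨Sgr, hSopen, ?_⟩
  have mulVpow (n : ℕ) : W * V ^ (n + 1) ⊆ W := by
    induction' n with n ih
    · simpa using hVmul
    · rw [pow_succ, ← mul_assoc]
      exact (Set.mul_subset_mul_right ih).trans hVmul
  have hsub (n : ℕ) : V ^ (n + 1) ⊆ W * V ^ (n + 1) := by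
    intro x xin
    rw [Set.mem_mul]
    exact ⟨1, einW, x, xin, one_mul x⟩
  exact iUnion_subset fun i a hai => mulVpow i (hsub i hai)

lemma td_quotient (G : Type*) [Group G] [TopologicalSpace G] [IsTopologicalGroup G] :
    @TotallyDisconnectedSpace (G ⧸ Subgroup.connectedComponentOfOne G) _ := by
  set N := Subgroup.connectedComponentOfOne G with hN
  haveI : N.Normal := normal_ccOne G
  have hfib : ∀ c : G ⧸ N, IsConnected ((QuotientGroup.mk : G → G ⧸ N) ⁻¹' {c}) := by
    intro c
    obtain ⟨w, rfl⟩ := QuotientGroup.mk_surjective c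
    have heq : (QuotientGroup.mk : G → G ⧸ N) ⁻¹' {((w : G ⧸ N))} =
        (fun n => w * n) '' connectedComponent (1:G) := by
      ext h
      simp only [mem_preimage, mem_singleton_iff, mem_image]
      constructor
      · intro hh
        refine ⟨w⁻¹ * h, ?_, by group⟩
        have h2 : w⁻¹ * h ∈ N := QuotientGroup.eq.1 hh.symm
        exact h2
      · rintro ⟨n, hn, rfl⟩
        refine (QuotientGroup.eq.2 ?_).symm
        have heq2 : w⁻¹ * (w * n) = n := by group
        rw [heq2]
        exact hn
    rw [heq]
    exact isConnected_connectedComponent.image _ (continuous_mul_left w).continuousOn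
  have hcomp1 : connectedComponent (1 : G ⧸ N) = {1} := by
    have hq := (QuotientGroup.isQuotientMap_mk N).preimage_connectedComponent hfib (1 : G)
    apply Subset.antisymm
    · intro b hb
      obtain ⟨g', rfl⟩ := QuotientGroup.mk_surjective b
      have hmem : g' ∈ (QuotientGroup.mk : G → G ⧸ N) ⁻¹'
          connectedComponent ((QuotientGroup.mk (1:G)) : G ⧸ N) := by
        simp only [mem_preimage]
        convert hb using 2
        rfl
      rw [hq] at hmem
      have : g' ∈ N := hmem
      simpa [mem_singleton_iff] using (QuotientGroup.eq_one_iff g').2 this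
    · simp only [singleton_subset_iff]
      exact mem_connectedComponent
  rw [totallyDisconnectedSpace_iff_connectedComponent_singleton]
  intro b
  apply Subset.antisymm
  · intro c hc
    have h2 : b⁻¹ * c ∈ (fun h => b⁻¹ * h) '' connectedComponent b := ⟨c, hc, rfl⟩
    have h3 := (continuous_mul_left b⁻¹).image_connectedComponent_subset b h2
    rw [show b⁻¹ * b = 1 by group, hcomp1] at h3
    have : b⁻¹ * c = 1 := h3
    have : c = b := by
      have := congrArg (fun t => b * t) this
      simpa [← mul_assoc] using this
    simp [this]
  · simp only [singleton_subset_iff]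
    exact mem_connectedComponent

lemma mem_component_of_mem_all_clopen
    {G : Type*} [Group G] [TopologicalSpace G] [IsTopologicalGroup G] [T2Space G]
    [LocallyCompactSpace G] {g : G}
    (hg : ∀ C : Set G, IsClopen C → (1:G) ∈ C → g ∈ C) : g ∈ connectedComponent (1 : G) := by
  by_contra hnot
  set N := Subgroup.connectedComponentOfOne G with hN
  haveI : N.Normal := normal_ccOne G
  haveI : IsClosed (N : Set G) := isClosed_connectedComponent
  haveI : TotallyDisconnectedSpace (G ⧸ N) := td_quotient G
  set π : G → G ⧸ N := QuotientGroup.mk with hπ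
  have hπg : (QuotientGroup.mk g : G ⧸ N) ≠ 1 := by
    intro h
    exact hnot ((QuotientGroup.eq_one_iff g).1 h)
  obtain ⟨K₀, hK₀c, hK₀n⟩ := exists_compact_mem_nhds (1 : G ⧸ N)
  have hopen : ({(QuotientGroup.mk g : G ⧸ N)}ᶜ : Set (G ⧸ N)) ∈ 𝓝 (1 : G ⧸ N) :=
    isOpen_compl_singleton.mem_nhds (by simpa using hπg.symm)
  obtain ⟨Vc, hVcn, hVccl, hVcsub⟩ := exists_mem_nhds_isClosed_subset hopen
  set K : Set (G ⧸ N) := K₀ ∩ Vc with hK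
  have hKc : IsCompact K := hK₀c.inter_right hVccl
  have hKn : K ∈ 𝓝 (1 : G ⧸ N) := inter_mem hK₀n hVcn
  have h1K : (1 : G ⧸ N) ∈ K := mem_of_mem_nhds hKn
  have hgK : (QuotientGroup.mk g : G ⧸ N) ∉ K := fun h => hVcsub h.2 rfl
  haveI : CompactSpace ↥K := isCompact_iff_compactSpace.1 hKc
  -- in the compact t.d. space K, the component of 1 is an intersection of clopens
  have hsing : connectedComponent (⟨1, h1K⟩ : ↥K) = {⟨1, h1K⟩} :=
    totallyDisconnectedSpace_iff_connectedComponent_singleton.1 inferInstance _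
  have hiinter := connectedComponent_eq_iInter_isClopen (⟨1, h1K⟩ : ↥K)
  have h1int : (1 : G ⧸ N) ∈ interior K := mem_interior_iff_mem_nhds.2 hKn
  -- finite subfamily
  have hempty : ((Subtype.val ⁻¹' (interior K))ᶜ ∩
      ⋂ Z : {Z : Set ↥K // IsClopen Z ∧ (⟨1, h1K⟩ : ↥K) ∈ Z}, Z.1) = ∅ := by
    rw [← hiinter, hsing]
    apply eq_empty_iff_forall_notMem.2
    rintro z ⟨hz1, hz2⟩
    rw [mem_singleton_iff] at hz2
    subst hz2
    exact hz1 (by simpa using h1int)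
  have hscl : IsClosed ((Subtype.val ⁻¹' (interior K))ᶜ : Set ↥K) :=
    isClosed_compl_iff.2 (continuous_subtype_val.isOpen_preimage _ isOpen_interior)
  obtain ⟨u, hu⟩ := hscl.isCompact.elim_finite_subfamily_closed
    (fun Z : {Z : Set ↥K // IsClopen Z ∧ (⟨1, h1K⟩ : ↥K) ∈ Z} => Z.1)
    (fun Z => Z.2.1.1) hempty
  set A' : Set ↥K := ⋂ Z ∈ u, (Z : {Z : Set ↥K // IsClopen Z ∧ (⟨1, h1K⟩ : ↥K) ∈ Z}).1 with hA'
  have hA'clopen : IsClopen A' := isClopen_biInter_finset fun Z _ => Z.2.1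
  have h1A' : (⟨1, h1K⟩ : ↥K) ∈ A' := mem_iInter₂.2 fun Z _ => Z.2.2
  have hA'sub : A' ⊆ Subtype.val ⁻¹' (interior K) := by
    intro z hz
    by_contra hzc
    exact eq_empty_iff_forall_notMem.1 hu z ⟨hzc, mem_iInter₂.1 hz |> fun h => mem_iInter₂.2 h⟩
  set A : Set (G ⧸ N) := Subtype.val '' A' with hA
  obtain ⟨O, hOopen, hOpre⟩ := isOpen_induced_iff.1 hA'clopen.2
  have hAOK : A = O ∩ K := by
    rw [hA, ← hOpre]
    rw [Subtype.image_preimage_coe, Set.inter_comm]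
  have hAint : A ⊆ interior K := by
    rw [hA]
    exact (image_mono hA'sub).trans (image_preimage_subset _ _)
  have hAopen : IsOpen A := by
    have : A = O ∩ interior K := by
      apply Subset.antisymm
      · intro a ha
        exact ⟨(hAOK ▸ ha).1, hAint ha⟩
      · intro a ha
        rw [hAOK]
        exact ⟨ha.1, interior_subset ha.2⟩
    rw [this]
    exact hOopen.inter isOpen_interior
  have hAcpt : IsCompact A := (hA'clopen.1.isCompact).image continuous_subtype_val
  have h1A : (1 : G ⧸ N) ∈ A := ⟨⟨1, h1K⟩, h1A', rfl⟩
  have hgA : (QuotientGroup.mk g : G ⧸ N) ∉ A := fun h => hgK ((hAOK ▸ h).2)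
  obtain ⟨U, hUopen, hUsub⟩ := exists_openSubgroup_sub_compact_open hAcpt hAopen h1A
  -- pull back to G
  set W : Set G := π ⁻¹' (U : Set (G ⧸ N)) with hW
  have hWclopen : IsClopen W := by
    constructor
    · have : IsClosed ((U.comap (QuotientGroup.mk' N) : Subgroup G) : Set G) :=
        Subgroup.isClosed_of_isOpen _ (by
          show IsOpen (QuotientGroup.mk' N ⁻¹' (U : Set (G ⧸ N)))
          exact hUopen.preimage QuotientGroup.continuous_mk)
      exact this
    · exact hUopen.preimage QuotientGroup.continuous_mk
  have h1W : (1:G) ∈ W := by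
    show π 1 ∈ (U : Set (G ⧸ N))
    exact U.one_mem
  have hgW := hg W hWclopen h1W
  exact hgA (hUsub hgW)

end VanDantzig

section Main

variable [ConnectedSpace M] [LocallyCompactSpace M]

set_option linter.unusedSectionVars false in
lemma locallyCompactG {ε₀ : ℝ} (hε₀ : 0 < ε₀)
    (hball : ∀ z : M, IsCompact (closedBall z ε₀)) (x : M) :
    LocallyCompactSpace (M ≃ᵢ M) := by
  apply (isCompact_ballG hε₀ hball x).locallyCompactSpace_of_mem_nhds_of_group (x := (1 : M ≃ᵢ M))
  have hopen : IsOpen {g : M ≃ᵢ M | dist (g x) x < ε₀} :=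
    isOpen_lt ((continuous_eval x).dist continuous_const) continuous_const
  apply Filter.mem_of_superset (hopen.mem_nhds (by simp [hε₀]))
  intro g hg
  show dist (g x) x ≤ ε₀
  exact le_of_lt hg

set_option linter.unusedSectionVars false in
lemma main (hhom : ∀ x y : M, ∃ f : M ≃ᵢ M, f x = y) (x y : M) :
    ∃ g ∈ connectedComponent (1 : M ≃ᵢ M), g x = y := by
  obtain ⟨ε₀, hε₀, hball⟩ := exists_eps0 hhom x
  haveI : LocallyCompactSpace (M ≃ᵢ M) := locallyCompactG hε₀ hball x
  set T : Set (M ≃ᵢ M) := {g : M ≃ᵢ M | g x = y} with hT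
  have hTc : IsCompact T := isCompact_fiber hhom hε₀ hball x y
  have hTcl : IsClosed T := IsClosed.preimage (continuous_eval x) isClosed_singleton
  haveI : Nonempty {C : Set (M ≃ᵢ M) // IsClopen C ∧ (1 : M ≃ᵢ M) ∈ C} :=
    ⟨⟨univ, isClopen_univ, trivial⟩⟩
  have hne : ∀ i : {C : Set (M ≃ᵢ M) // IsClopen C ∧ (1 : M ≃ᵢ M) ∈ C},
      (T ∩ i.1).Nonempty := by
    intro i
    obtain ⟨g, hgC, hgx⟩ := clopen_orbit hhom hε₀ hball x i.2.1 i.2.2 y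
    exact ⟨g, hgx, hgC⟩
  have hdir : Directed (· ⊇ ·)
      (fun i : {C : Set (M ≃ᵢ M) // IsClopen C ∧ (1 : M ≃ᵢ M) ∈ C} => T ∩ i.1) := by
    intro i j
    refine ⟨⟨i.1 ∩ j.1, i.2.1.inter j.2.1, ⟨i.2.2, j.2.2⟩⟩, ?_, ?_⟩
    · exact fun g hg => ⟨hg.1, hg.2.1⟩
    · exact fun g hg => ⟨hg.1, hg.2.2⟩
  obtain ⟨g, hg⟩ := IsCompact.nonempty_iInter_of_directed_nonempty_isCompact_isClosed
    _ hdir hne (fun i => hTc.inter_right i.2.1.1) (fun i => hTcl.inter i.2.1.1)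
  have hgx : g x = y := (mem_iInter.1 hg ⟨univ, isClopen_univ, trivial⟩).1
  have hgcl : ∀ C : Set (M ≃ᵢ M), IsClopen C → (1 : M ≃ᵢ M) ∈ C → g ∈ C :=
    fun C hC h1 => (mem_iInter.1 hg ⟨C, hC, h1⟩).2
  exact ⟨g, mem_component_of_mem_all_clopen hgcl, hgx⟩

end Main

end Statement14Aux

/-- the connected component of the identity of the isometry
group of a homogeneous metric space (with the topology of pointwise
convergence) acts transitively. -/
theorem statement14 (M : Type*) [MetricSpace M] [ConnectedSpace M] [LocallyCompactSpace M]
    (hhom : ∀ x y : M, ∃ f : M ≃ᵢ M, f x = y) :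
    letI : TopologicalSpace (M ≃ᵢ M) :=
      TopologicalSpace.induced (fun f : M ≃ᵢ M => (⇑f : M → M)) Pi.topologicalSpace
    ∀ x y : M, ∃ g ∈ connectedComponent (1 : M ≃ᵢ M), g x = y := by
  intro x y
  exact Statement14Aux.main hhom x y
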